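/- Let ε ∈ ℂ be a primitive 5th root of unity and let G_icosa be the binary icosahedral group, i.e., the subgroup of GL(2,ℂ) generated by the matrices S = [[ε³, 0], [0, ε²]], T = (1/(ε² − ε³))·[[ε + ε⁴, 1], [1, −(ε + ε⁴)]], and U = [[0, 1], [−1, 0]]. For every degree d with 1 ≤ d ≤ 11, the only homogeneous polynomial f ∈ ℂ[x₁,x₂] of degree d satisfying f(Ax) = f(x) for all A ∈ G_icosa is the zero polynomial; that is, the space of G_icosa-invariant homogeneous polynomials of degree d is zero for 1 ≤ d ≤ 11, while for d = 0 it is one-dimensional. -/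

import Mathlib

open Matrix MvPolynomial

noncomputable section

/-- The substitution action `f ↦ f(Ax)` of a matrix on polynomials in two variables. -/
def substMap (A : Matrix (Fin 2) (Fin 2) ℂ) :
    MvPolynomial (Fin 2) ℂ →ₗ[ℂ] MvPolynomial (Fin 2) ℂ :=
  (MvPolynomial.aeval fun i => ∑ j, A i j • (X j : MvPolynomial (Fin 2) ℂ)).toLinearMap

/-- `Vd d` is the homogeneous degree-`d` component of `ℂ[x₁,x₂]`. -/
def Vd (d : ℕ) : Submodule ℂ (MvPolynomial (Fin 2) ℂ) :=
  homogeneousSubmodule (Fin 2) ℂ d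

lemma substMap_mem (A : Matrix (Fin 2) (Fin 2) ℂ) {d : ℕ} {f : MvPolynomial (Fin 2) ℂ}
    (hf : f ∈ Vd d) : substMap A f ∈ Vd d := by
  have hg : ∀ i, (∑ j, A i j • (X j : MvPolynomial (Fin 2) ℂ)).IsHomogeneous 1 := by
    intro i
    apply IsHomogeneous.sum
    intro j _
    rw [smul_eq_C_mul]
    exact isHomogeneous_C_mul_X _ _
  have h := ((mem_homogeneousSubmodule _ _).1 hf).aeval _ hg
  rw [one_mul] at h
  exact (mem_homogeneousSubmodule _ _).2 h

/-- The action of a matrix on the degree-`d` homogeneous component, by `f ↦ f(Ax)`. -/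
def actV (A : Matrix (Fin 2) (Fin 2) ℂ) (d : ℕ) : Vd d →ₗ[ℂ] Vd d :=
  LinearMap.codRestrict (Vd d) ((substMap A).comp (Vd d).subtype)
    fun f => substMap_mem A f.2

/-- The space of `G`-invariant homogeneous polynomials of degree `d`. -/
def invariants (G : Subgroup (GL (Fin 2) ℂ)) (d : ℕ) :
    Submodule ℂ (MvPolynomial (Fin 2) ℂ) where
  carrier := {f | f ∈ Vd d ∧ ∀ g ∈ G, substMap (↑g) f = f}
  add_mem' := fun ha hb => ⟨(Vd _).add_mem ha.1 hb.1,
    fun g hg => by rw [map_add, ha.2 g hg, hb.2 g hg]⟩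
  zero_mem' := ⟨(Vd _).zero_mem, fun g _ => map_zero _⟩
  smul_mem' := fun c f hf => ⟨(Vd _).smul_mem c hf.1,
    fun g hg => by rw [_root_.map_smul, hf.2 g hg]⟩

/-! ### Auxiliary lemmas -/

lemma eval_substMap (A : Matrix (Fin 2) (Fin 2) ℂ) (p : Fin 2 → ℂ) (f : MvPolynomial (Fin 2) ℂ) :
    eval p (substMap A f) = eval (fun i => ∑ j, A i j * p j) f := by
  induction f using MvPolynomial.induction_on with
  | C a => simp [substMap]
  | add q r hq hr => simp [map_add, hq, hr]
  | mul_X q i hq =>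
      have h1 : substMap A (q * X i) = substMap A q * substMap A (X i) := by
        simp only [substMap, AlgHom.toLinearMap_apply, _root_.map_mul]
      have h2 : substMap A (X i) = ∑ j, A i j • (X j : MvPolynomial (Fin 2) ℂ) := by
        simp [substMap]
      rw [h1, _root_.map_mul, hq, h2]
      simp [smul_eq_C_mul]

lemma fin2_eta (m : Fin 2 →₀ ℕ) :
    Finsupp.single 0 (m 0) + Finsupp.single 1 (m 1) = m := by
  ext i; fin_cases i <;> simp [Finsupp.single_apply]

lemma degree_fin2 (m : Fin 2 →₀ ℕ) : m.degree = m 0 + m 1 := by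
  rw [Finsupp.degree_apply, Finset.sum_subset (Finset.subset_univ _)
    (fun x _ hx => Finsupp.notMem_support_iff.1 hx), Fin.sum_univ_two]

lemma substMap_diag_monomial (α β : ℂ) (m : Fin 2 →₀ ℕ) (c : ℂ) :
    substMap !![α, 0; 0, β] (monomial m c) = monomial m (α ^ m 0 * β ^ m 1 * c) := by
  simp only [substMap, AlgHom.toLinearMap_apply, aeval_monomial, Fin.sum_univ_two]
  rw [Finsupp.prod_pow, Fin.prod_univ_two]
  rw [monomial_eq, Finsupp.prod_pow, Fin.prod_univ_two]
  norm_num [Matrix.cons_val_zero, Matrix.cons_val_one, Matrix.head_cons]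
  simp only [smul_eq_C_mul]
  ring

lemma coeff_substMap_diag (α β : ℂ) (f : MvPolynomial (Fin 2) ℂ) (m : Fin 2 →₀ ℕ) :
    coeff m (substMap !![α, 0; 0, β] f) = α ^ m 0 * β ^ m 1 * coeff m f := by
  conv_lhs => rw [f.as_sum, map_sum]
  rw [coeff_sum]
  simp_rw [substMap_diag_monomial, coeff_monomial]
  rw [Finset.sum_ite_eq' f.support m (fun m' => α ^ m' 0 * β ^ m' 1 * coeff m' f)]
  by_cases h : m ∈ f.support
  · rw [if_pos h]
  · rw [if_neg h, notMem_support_iff.1 h, mul_zero]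

def mu (d a : ℕ) : Fin 2 →₀ ℕ := Finsupp.single 0 a + Finsupp.single 1 (d - a)

lemma mu_apply0 (d a : ℕ) : mu d a 0 = a := by simp [mu, Finsupp.single_apply]
lemma mu_apply1 (d a : ℕ) : mu d a 1 = d - a := by simp [mu, Finsupp.single_apply]

lemma homog_eq_sum {d : ℕ} (f : MvPolynomial (Fin 2) ℂ) (hf : f.IsHomogeneous d) :
    f = ∑ a ∈ Finset.range (d + 1), monomial (mu d a) (coeff (mu d a) f) := by
  ext m
  rw [coeff_sum]
  simp_rw [coeff_monomial]
  by_cases hm : m 0 + m 1 = d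
  · rw [Finset.sum_eq_single_of_mem (m 0) (Finset.mem_range.2 (by omega))]
    · have hmm : mu d (m 0) = m := by
        ext i
        fin_cases i
        · rw [show ((⟨0, by omega⟩ : Fin 2)) = 0 from rfl, mu_apply0]
        · rw [show ((⟨1, by omega⟩ : Fin 2)) = 1 from rfl, mu_apply1]; show d - m 0 = m 1; omega
      rw [if_pos hmm, hmm]
    · intro a _ ha
      rw [if_neg]
      intro hc
      exact ha (by rw [← hc, mu_apply0])
  · rw [hf.coeff_eq_zero (by rw [degree_fin2]; exact hm), Finset.sum_eq_zero]
    intro a ha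
    rw [if_neg]
    intro hc
    apply hm
    have h0 := congrArg (fun g : Fin 2 →₀ ℕ => g 0) hc
    have h1 := congrArg (fun g : Fin 2 →₀ ℕ => g 1) hc
    simp only [mu_apply0, mu_apply1] at h0 h1
    have ha' : a ≤ d := Nat.lt_succ_iff.mp (Finset.mem_range.1 ha)
    omega

lemma eval_monomial_mu (q : Fin 2 → ℂ) (d a : ℕ) (c : ℂ) :
    eval q (monomial (mu d a) c) = c * q 0 ^ a * q 1 ^ (d - a) := by
  rw [eval_monomial, Finsupp.prod_pow, Fin.prod_univ_two, mu_apply0, mu_apply1]; ring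

section eps
variable {ε : ℂ} (hε : IsPrimitiveRoot ε 5)
include hε

lemma hsum5 : ε ^ 4 + ε ^ 3 + ε ^ 2 + ε + 1 = 0 := by
  have h0 := hε.geom_sum_eq_zero (by norm_num)
  simp [Finset.sum_range_succ] at h0
  linear_combination h0

lemma hmu2 : (ε + ε ^ 4) ^ 2 = 1 - (ε + ε ^ 4) := by
  linear_combination (ε ^ 4 - ε ^ 3 + 2 * ε - 1) * hsum5 hε

lemma hmu_ne : ε + ε ^ 4 ≠ 0 := by
  intro h
  have h2 := hmu2 hε
  rw [h] at h2
  norm_num at h2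

lemma hz_ne : ε ^ 2 - ε ^ 3 ≠ 0 := by
  have h1 : ε ≠ 0 := hε.ne_zero (by norm_num)
  have h2 : ε ≠ 1 := hε.ne_one (by norm_num)
  intro h
  apply h2
  have hfac : ε ^ 2 * (1 - ε) = 0 := by linear_combination h
  rcases mul_eq_zero.1 hfac with h3 | h3
  · exact ((h1 (pow_eq_zero_iff two_ne_zero |>.mp h3))).elim
  · linear_combination -h3

lemma hd10_ne : (ε ^ 2 - ε ^ 3) ^ 10 ≠ 1 + (ε + ε ^ 4) ^ 10 := by
  intro h
  have hq : 330 * (ε + ε ^ 4) = 210 := by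
    linear_combination h - ((209:ℂ) - (539:ℂ) * ε + (330:ℂ) * ε ^ 2 - (330:ℂ) * ε ^ 4 + (539:ℂ) * ε ^ 5 - (539:ℂ) * ε ^ 6 + (330:ℂ) * ε ^ 7 - (330:ℂ) * ε ^ 9 + (538:ℂ) * ε ^ 10 - (538:ℂ) * ε ^ 11 + (330:ℂ) * ε ^ 12 - (10:ℂ) * ε ^ 13 - (320:ℂ) * ε ^ 14 + (538:ℂ) * ε ^ 15 - (583:ℂ) * ε ^ 16 + (375:ℂ) * ε ^ 17 - (10:ℂ) * ε ^ 18 - (440:ℂ) * ε ^ 19 + (659:ℂ) * ε ^ 20 - (594:ℂ) * ε ^ 21 + (220:ℂ) * ε ^ 22 + (35:ℂ) * ε ^ 23 - (110:ℂ) * ε ^ 24 - (55:ℂ) * ε ^ 25 + (120:ℂ) * ε ^ 26 - (110:ℂ) * ε ^ 27 - (10:ℂ) * ε ^ 28 + (45:ℂ) * ε ^ 29 - (44:ℂ) * ε ^ 30 - (1:ℂ) * ε ^ 31 + (10:ℂ) * ε ^ 32 - (10:ℂ) * ε ^ 33 + (1:ℂ) * ε ^ 35 - (1:ℂ) * ε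 ^ 36) * hsum5 hε
  have habs : (5:ℂ)/121 = 0 := by
    linear_combination hmu2 hε - ((ε + ε ^ 4)/330 + 3/605) * hq
  norm_num at habs

end eps

theorem stmt3 (ε : ℂ) (hε : IsPrimitiveRoot ε 5)
    (S T U : GL (Fin 2) ℂ)
    (hS : (S : Matrix (Fin 2) (Fin 2) ℂ) = !![ε ^ 3, 0; 0, ε ^ 2])
    (hT : (T : Matrix (Fin 2) (Fin 2) ℂ) =
      (ε ^ 2 - ε ^ 3)⁻¹ • !![ε + ε ^ 4, 1; 1, -(ε + ε ^ 4)])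
    (hU : (U : Matrix (Fin 2) (Fin 2) ℂ) = !![0, 1; -1, 0])
    (Gicosa : Subgroup (GL (Fin 2) ℂ)) (hG : Gicosa = Subgroup.closure {S, T, U}) :
    (∀ d : ℕ, 1 ≤ d → d ≤ 11 →
      ∀ f : MvPolynomial (Fin 2) ℂ, f ∈ homogeneousSubmodule (Fin 2) ℂ d →
        (∀ g ∈ Gicosa, substMap (↑g) f = f) → f = 0) ∧
    Module.finrank ℂ (invariants Gicosa 0) = 1 := by
  constructor
  · intro d hd1 hd2 f hfm hfinv
    have hf : MvPolynomial.IsHomogeneous f d := (mem_homogeneousSubmodule _ _).1 hfm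
    have hmemS : S ∈ Gicosa := hG ▸ Subgroup.subset_closure (by simp)
    have hmemT : T ∈ Gicosa := hG ▸ Subgroup.subset_closure (by simp)
    have hmemU : U ∈ Gicosa := hG ▸ Subgroup.subset_closure (by simp)
    have hfS := hfinv S hmemS
    have hfT := hfinv T hmemT
    have hfU := hfinv U hmemU
    rw [hS] at hfS
    rw [hT] at hfT
    rw [hU] at hfU
    have hc : ∀ m : Fin 2 →₀ ℕ, ¬ (5 ∣ 3 * m 0 + 2 * m 1) → coeff m f = 0 := by
      intro m hm
      have h1 := congrArg (coeff m) hfS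
      rw [coeff_substMap_diag] at h1
      by_contra hne
      apply hm
      apply (hε.pow_eq_one_iff_dvd _).1
      have h2 : ε ^ (3 * m 0 + 2 * m 1) * coeff m f = 1 * coeff m f := by
        rw [one_mul]; rw [pow_add, pow_mul, pow_mul]; linear_combination h1
      exact mul_right_cancel₀ hne h2
    have hUev : ∀ x y : ℂ, eval ![y, -x] f = eval ![x, y] f := by
      intro x y
      have h := congrArg (eval ![x, y]) hfU
      rw [eval_substMap] at h
      have hpt : (fun i => ∑ j, (!![0, 1; -1, 0] : Matrix (Fin 2) (Fin 2) ℂ) i j * ![x, y] j)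
          = ![y, -x] := by
        funext i; fin_cases i <;> simp [Fin.sum_univ_two]
      rw [hpt] at h
      exact h
    have hTev : ∀ x y : ℂ, eval
        ![(ε ^ 2 - ε ^ 3)⁻¹ * ((ε + ε ^ 4) * x + y),
          (ε ^ 2 - ε ^ 3)⁻¹ * (x - (ε + ε ^ 4) * y)] f = eval ![x, y] f := by
      intro x y
      have h := congrArg (eval ![x, y]) hfT
      rw [eval_substMap] at h
      have hpt : (fun i => ∑ j, ((ε ^ 2 - ε ^ 3)⁻¹ •
            (!![ε + ε ^ 4, 1; 1, -(ε + ε ^ 4)] : Matrix (Fin 2) (Fin 2) ℂ)) i j * ![x, y] j)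
          = ![(ε ^ 2 - ε ^ 3)⁻¹ * ((ε + ε ^ 4) * x + y),
              (ε ^ 2 - ε ^ 3)⁻¹ * (x - (ε + ε ^ 4) * y)] := by
        funext i; fin_cases i <;> simp [Fin.sum_univ_two, Matrix.smul_apply, smul_eq_mul] <;> ring
      rw [hpt] at h
      exact h
    have hrep := homog_eq_sum f hf
    interval_cases d
    · -- d = 1
      simp only [Finset.sum_range_succ, Finset.sum_range_zero, zero_add] at hrep
      rw [hc (mu 1 0) (by rw [mu_apply0, mu_apply1]; decide),
          hc (mu 1 1) (by rw [mu_apply0, mu_apply1]; decide)] at hrep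
      simpa using hrep
    · -- d = 2
      simp only [Finset.sum_range_succ, Finset.sum_range_zero, zero_add] at hrep
      rw [hc (mu 2 0) (by rw [mu_apply0, mu_apply1]; decide),
          hc (mu 2 2) (by rw [mu_apply0, mu_apply1]; decide)] at hrep
      simp only [monomial_zero, add_zero, zero_add] at hrep
      set c : ℂ := coeff (mu 2 1) f with hcdef
      simp only [hrep] at hUev
      have e1 := hUev 1 1
      simp only [eval_monomial_mu, Matrix.cons_val_zero, Matrix.cons_val_one, Matrix.head_cons] at e1
      norm_num at e1
      have hc0 : c = 0 := by linear_combination (-(1/2) : ℂ) * e1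
      rw [hrep, hc0, monomial_zero]
    · -- d = 3
      simp only [Finset.sum_range_succ, Finset.sum_range_zero, zero_add] at hrep
      rw [hc (mu 3 0) (by rw [mu_apply0, mu_apply1]; decide),
          hc (mu 3 1) (by rw [mu_apply0, mu_apply1]; decide),
          hc (mu 3 2) (by rw [mu_apply0, mu_apply1]; decide),
          hc (mu 3 3) (by rw [mu_apply0, mu_apply1]; decide)] at hrep
      simpa using hrep
    · -- d = 4
      simp only [Finset.sum_range_succ, Finset.sum_range_zero, zero_add] at hrep
      rw [hc (mu 4 0) (by rw [mu_apply0, mu_apply1]; decide),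
          hc (mu 4 1) (by rw [mu_apply0, mu_apply1]; decide),
          hc (mu 4 3) (by rw [mu_apply0, mu_apply1]; decide),
          hc (mu 4 4) (by rw [mu_apply0, mu_apply1]; decide)] at hrep
      simp only [monomial_zero, add_zero, zero_add] at hrep
      set c : ℂ := coeff (mu 4 2) f with hcdef
      simp only [hrep] at hTev
      have e1 := hTev 1 0
      simp only [eval_monomial_mu, Matrix.cons_val_zero, Matrix.cons_val_one, Matrix.head_cons] at e1
      norm_num at e1
      have hc0 : c = 0 := by
        rcases e1 with (h | h | h) | h
        · exact h
        · exact absurd h (hz_ne hε)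
        · exact absurd h (hmu_ne hε)
        · exact absurd h (hz_ne hε)
      rw [hrep, hc0, monomial_zero]
    · -- d = 5
      simp only [Finset.sum_range_succ, Finset.sum_range_zero, zero_add] at hrep
      rw [hc (mu 5 1) (by rw [mu_apply0, mu_apply1]; decide),
          hc (mu 5 2) (by rw [mu_apply0, mu_apply1]; decide),
          hc (mu 5 3) (by rw [mu_apply0, mu_apply1]; decide),
          hc (mu 5 4) (by rw [mu_apply0, mu_apply1]; decide)] at hrep
      simp only [monomial_zero, add_zero, zero_add] at hrep
      set c0 : ℂ := coeff (mu 5 0) f with hc0def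
      set c5 : ℂ := coeff (mu 5 5) f with hc5def
      simp only [hrep] at hUev
      have e1 := hUev 1 0
      have e2 := hUev 0 1
      norm_num [eval_monomial_mu] at e1 e2
      have h0 : c0 = 0 := by linear_combination (-(1/2):ℂ) * e1 - (1/2:ℂ) * e2
      have h5 : c5 = 0 := by linear_combination e2 + h0
      rw [hrep, h0, h5, monomial_zero, monomial_zero, add_zero]
    · -- d = 6
      simp only [Finset.sum_range_succ, Finset.sum_range_zero, zero_add] at hrep
      rw [hc (mu 6 0) (by rw [mu_apply0, mu_apply1]; decide),
          hc (mu 6 1) (by rw [mu_apply0, mu_apply1]; decide),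
          hc (mu 6 2) (by rw [mu_apply0, mu_apply1]; decide),
          hc (mu 6 4) (by rw [mu_apply0, mu_apply1]; decide),
          hc (mu 6 5) (by rw [mu_apply0, mu_apply1]; decide),
          hc (mu 6 6) (by rw [mu_apply0, mu_apply1]; decide)] at hrep
      simp only [monomial_zero, add_zero, zero_add] at hrep
      set c3 : ℂ := coeff (mu 6 3) f with hc3def
      simp only [hrep] at hUev
      have e1 := hUev 1 1
      norm_num [eval_monomial_mu] at e1
      have h3 : c3 = 0 := by linear_combination (-(1/2):ℂ) * e1
      rw [hrep, h3, monomial_zero]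
    · -- d = 7
      simp only [Finset.sum_range_succ, Finset.sum_range_zero, zero_add] at hrep
      rw [hc (mu 7 0) (by rw [mu_apply0, mu_apply1]; decide),
          hc (mu 7 2) (by rw [mu_apply0, mu_apply1]; decide),
          hc (mu 7 3) (by rw [mu_apply0, mu_apply1]; decide),
          hc (mu 7 4) (by rw [mu_apply0, mu_apply1]; decide),
          hc (mu 7 5) (by rw [mu_apply0, mu_apply1]; decide),
          hc (mu 7 7) (by rw [mu_apply0, mu_apply1]; decide)] at hrep
      simp only [monomial_zero, add_zero, zero_add] at hrep
      set c1 : ℂ := coeff (mu 7 1) f with hc1def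
      set c6 : ℂ := coeff (mu 7 6) f with hc6def
      simp only [hrep] at hUev
      have e1 := hUev 1 1
      have e2 := hUev 1 (-1)
      norm_num [eval_monomial_mu] at e1 e2
      have h1 : c1 = 0 := by linear_combination (-(1/2):ℂ) * e2
      have h6 : c6 = 0 := by linear_combination (-(1/2):ℂ) * e1
      rw [hrep, h1, h6, monomial_zero, monomial_zero, add_zero]
    · -- d = 8
      simp only [Finset.sum_range_succ, Finset.sum_range_zero, zero_add] at hrep
      rw [hc (mu 8 0) (by rw [mu_apply0, mu_apply1]; decide),
          hc (mu 8 1) (by rw [mu_apply0, mu_apply1]; decide),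
          hc (mu 8 2) (by rw [mu_apply0, mu_apply1]; decide),
          hc (mu 8 3) (by rw [mu_apply0, mu_apply1]; decide),
          hc (mu 8 5) (by rw [mu_apply0, mu_apply1]; decide),
          hc (mu 8 6) (by rw [mu_apply0, mu_apply1]; decide),
          hc (mu 8 7) (by rw [mu_apply0, mu_apply1]; decide),
          hc (mu 8 8) (by rw [mu_apply0, mu_apply1]; decide)] at hrep
      simp only [monomial_zero, add_zero, zero_add] at hrep
      set c4 : ℂ := coeff (mu 8 4) f with hc4def
      simp only [hrep] at hTev
      have e1 := hTev 1 0
      norm_num [eval_monomial_mu] at e1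
      have hc0 : c4 = 0 := by
        rcases e1 with (h | h | h) | h
        · exact h
        · exact absurd h (hz_ne hε)
        · exact absurd h (hmu_ne hε)
        · exact absurd h (hz_ne hε)
      rw [hrep, hc0, monomial_zero]
    · -- d = 9
      simp only [Finset.sum_range_succ, Finset.sum_range_zero, zero_add] at hrep
      rw [hc (mu 9 0) (by rw [mu_apply0, mu_apply1]; decide),
          hc (mu 9 1) (by rw [mu_apply0, mu_apply1]; decide),
          hc (mu 9 3) (by rw [mu_apply0, mu_apply1]; decide),
          hc (mu 9 4) (by rw [mu_apply0, mu_apply1]; decide),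
          hc (mu 9 5) (by rw [mu_apply0, mu_apply1]; decide),
          hc (mu 9 6) (by rw [mu_apply0, mu_apply1]; decide),
          hc (mu 9 8) (by rw [mu_apply0, mu_apply1]; decide),
          hc (mu 9 9) (by rw [mu_apply0, mu_apply1]; decide)] at hrep
      simp only [monomial_zero, add_zero, zero_add] at hrep
      set c2 : ℂ := coeff (mu 9 2) f with hc2def
      set c7 : ℂ := coeff (mu 9 7) f with hc7def
      simp only [hrep] at hUev
      have e1 := hUev 1 1
      have e2 := hUev 1 (-1)
      norm_num [eval_monomial_mu] at e1 e2
      have h2 : c2 = 0 := by linear_combination (-(1/2):ℂ) * e1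
      have h7 : c7 = 0 := by linear_combination (-(1/2):ℂ) * e2
      rw [hrep, h2, h7, monomial_zero, monomial_zero, add_zero]
    · -- d = 10
      simp only [Finset.sum_range_succ, Finset.sum_range_zero, zero_add] at hrep
      rw [hc (mu 10 1) (by rw [mu_apply0, mu_apply1]; decide),
          hc (mu 10 2) (by rw [mu_apply0, mu_apply1]; decide),
          hc (mu 10 3) (by rw [mu_apply0, mu_apply1]; decide),
          hc (mu 10 4) (by rw [mu_apply0, mu_apply1]; decide),
          hc (mu 10 6) (by rw [mu_apply0, mu_apply1]; decide),
          hc (mu 10 7) (by rw [mu_apply0, mu_apply1]; decide),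
          hc (mu 10 8) (by rw [mu_apply0, mu_apply1]; decide),
          hc (mu 10 9) (by rw [mu_apply0, mu_apply1]; decide)] at hrep
      simp only [monomial_zero, add_zero, zero_add] at hrep
      set c0 : ℂ := coeff (mu 10 0) f with hc0def
      set c5 : ℂ := coeff (mu 10 5) f with hc5def
      set c10 : ℂ := coeff (mu 10 10) f with hc10def
      simp only [hrep] at hUev hTev
      have e1 := hUev 1 0
      have e2 := hUev 1 1
      have e3 := hTev 1 0
      norm_num [eval_monomial_mu] at e1 e2 e3
      have h5 : c5 = 0 := by linear_combination (-(1/2):ℂ) * e2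
      rw [← e1, h5] at e3
      have hz := hz_ne hε
      field_simp at e3
      have hden : ε ^ 20 * (1 - ε) ^ 10 ≠ 0 := by
        rw [show ε ^ 20 * (1 - ε) ^ 10 = (ε ^ 2 - ε ^ 3) ^ 10 by ring]; exact pow_ne_zero _ hz
      have hfac : c0 * (1 + (ε + ε ^ 4) ^ 10 - (ε ^ 2 - ε ^ 3) ^ 10) = 0 := by
        linear_combination (div_eq_iff hden).1 e3
      rcases mul_eq_zero.1 hfac with h | h
      · have h10 : c10 = 0 := by rw [← e1]; exact h
        rw [hrep, h, h5, h10, monomial_zero, monomial_zero, monomial_zero, add_zero, add_zero]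
      · exact absurd (by linear_combination -h) (hd10_ne hε)
    · -- d = 11
      simp only [Finset.sum_range_succ, Finset.sum_range_zero, zero_add] at hrep
      rw [hc (mu 11 0) (by rw [mu_apply0, mu_apply1]; decide),
          hc (mu 11 1) (by rw [mu_apply0, mu_apply1]; decide),
          hc (mu 11 2) (by rw [mu_apply0, mu_apply1]; decide),
          hc (mu 11 4) (by rw [mu_apply0, mu_apply1]; decide),
          hc (mu 11 5) (by rw [mu_apply0, mu_apply1]; decide),
          hc (mu 11 6) (by rw [mu_apply0, mu_apply1]; decide),
          hc (mu 11 7) (by rw [mu_apply0, mu_apply1]; decide),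
          hc (mu 11 9) (by rw [mu_apply0, mu_apply1]; decide),
          hc (mu 11 10) (by rw [mu_apply0, mu_apply1]; decide),
          hc (mu 11 11) (by rw [mu_apply0, mu_apply1]; decide)] at hrep
      simp only [monomial_zero, add_zero, zero_add] at hrep
      set c3 : ℂ := coeff (mu 11 3) f with hc3def
      set c8 : ℂ := coeff (mu 11 8) f with hc8def
      simp only [hrep] at hUev
      have e1 := hUev 1 1
      have e2 := hUev 1 (-1)
      norm_num [eval_monomial_mu] at e1 e2
      have h3 : c3 = 0 := by linear_combination (-(1/2):ℂ) * e2
      have h8 : c8 = 0 := by linear_combination (-(1/2):ℂ) * e1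
      rw [hrep, h3, h8, monomial_zero, monomial_zero, add_zero]
  · have h10 : invariants Gicosa 0 = Submodule.span ℂ {(1 : MvPolynomial (Fin 2) ℂ)} := by
      apply le_antisymm
      · intro f hf
        obtain ⟨hf0, -⟩ := hf
        have hh : f.IsHomogeneous 0 := (mem_homogeneousSubmodule _ _).1 hf0
        have hfC : f = C (coeff 0 f) := by
          ext m
          by_cases hm : m = 0
          · simp [hm]
          · rw [hh.coeff_eq_zero (by
                rw [Ne, Finsupp.degree_eq_zero_iff]; exact hm), coeff_C, if_neg (Ne.symm hm)]
        rw [hfC, show (C (coeff 0 f) : MvPolynomial (Fin 2) ℂ) = coeff 0 f • 1 by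
          rw [smul_eq_C_mul, mul_one]]
        exact Submodule.smul_mem _ _ (Submodule.mem_span_singleton_self 1)
      · rw [Submodule.span_le, Set.singleton_subset_iff]
        exact ⟨(mem_homogeneousSubmodule _ _).2 (isHomogeneous_one _ _),
          fun g _ => by simp [substMap]⟩
    rw [h10]
    exact finrank_span_singleton one_ne_zero
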